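/- Let n ≥ 1 and let c, d : ℝ → ℝ³ be differentiable curves with v(u) = d(u) − c(u). Suppose λ, μ : ℝ → ℝ satisfy c'(u) = λ(u)·v(u) + μ(u)·v'(u) for all u, and λ(u) ≠ 0 for all u. Define Λ(u) = (n(μ(u)+1) + u·λ(u))/λ(u) and M(u) = (n·μ(u) + u·λ(u))/λ(u). Then for all u, c(u) + ((Λ(u) − u)/n)·c'(u) = d(u) + ((M(u) − u)/n)·d'(u). -/
import Mathlib


/-- from the differential developability condition
`c' = λ·v + μ·v'` with `v = d − c` and `λ ≠ 0`, the functions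
`Λ(u) = (n(μ(u)+1) + u·λ(u))/λ(u)` and `M(u) = (n·μ(u) + u·λ(u))/λ(u)` satisfy the
algebraic (blossom) developability relation. -/
theorem lambda_mu_to_blossom_relation
    (n : ℕ) (hn : 1 ≤ n) (c d : ℝ → Fin 3 → ℝ)
    (hc : Differentiable ℝ c) (hd : Differentiable ℝ d)
    (v : ℝ → Fin 3 → ℝ) (hv : ∀ u, v u = d u - c u)
    (lam mu : ℝ → ℝ)
    (hode : ∀ u, deriv c u = lam u • v u + mu u • deriv v u)
    (hlam : ∀ u, lam u ≠ 0)
    (Λ M : ℝ → ℝ)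
    (hΛ : ∀ u, Λ u = ((n : ℝ) * (mu u + 1) + u * lam u) / lam u)
    (hM : ∀ u, M u = ((n : ℝ) * mu u + u * lam u) / lam u) :
    ∀ u, c u + ((Λ u - u) / (n : ℝ)) • deriv c u
       = d u + ((M u - u) / (n : ℝ)) • deriv d u := by
  intro u
  have hveq : v = d - c := funext fun t => hv t
  have hv' : deriv v u = deriv d u - deriv c u := by
    rw [hveq]; exact deriv_sub (hd u) (hc u)
  have hL := hlam u
  have hn' : (n : ℝ) ≠ 0 := Nat.cast_ne_zero.mpr (by omega)
  funext i
  have hode' := congrFun (hode u) i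
  have hvi := congrFun (hv u) i
  have hvi' := congrFun hv' i
  simp only [Pi.add_apply, Pi.smul_apply, Pi.sub_apply, smul_eq_mul] at hode' hvi hvi' ⊢
  rw [hvi, hvi'] at hode'
  rw [hΛ u, hM u]
  field_simp
  linear_combination (n : ℝ) * hode'
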